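/- Let p be an odd prime, K = Q(ζ_p), and suppose the p-part A^+ of the class group of the maximal real subfield K^+ is cyclic and nontrivial of order d. Let H^+ be the unramified abelian extension of K with Gal(H^+/K) ≅ A^+ (the lift of the p-Hilbert class field of K^+). Then no primitive p-th root of unity ζ_p is a norm from E(H^+): ζ_p ∉ N_{H^+/K}(E(H^+)). -/

import Mathlib

open NumberField

open IntermediateField

def UnramifiedAtFinitePrimes (K L : Type*) [Field K] [NumberField K] [Field L] [NumberField L]
    [Algebra K L] : Prop :=
  ∀ P : Ideal (𝓞 L), P.IsMaximal →
    Ideal.ramificationIdx'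
      (P.comap (algebraMap (𝓞 K) (𝓞 L))) P = 1

def UnramifiedAtInfinitePlaces (K L : Type*) [Field K] [NumberField K] [Field L] [NumberField L]
    [Algebra K L] : Prop :=
  ∀ w : InfinitePlace L, (w.comap (algebraMap K L)).IsReal → w.IsReal

/-- If the pushforward of `q` is contained in `P ^ 2`, then the ramification index of `P`
over `q` cannot be `1`. -/
lemma ramIdx_ne_one' {R S : Type*} [CommRing R] [CommRing S] [Algebra R S]
    (q : Ideal R) (P : Ideal S) (h2 : Ideal.map (algebraMap R S) q ≤ P ^ 2) :
    Ideal.ramificationIdx' q P ≠ 1 := by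
  intro h1
  have hdef : Ideal.ramificationIdx' q P = sSup {n | Ideal.map (algebraMap R S) q ≤ P ^ n} := rfl
  by_cases hb : BddAbove {n | Ideal.map (algebraMap R S) q ≤ P ^ n}
  · have h2' : (2 : ℕ) ≤ sSup {n | Ideal.map (algebraMap R S) q ≤ P ^ n} := le_csSup hb h2
    rw [← hdef, h1] at h2'
    omega
  · rw [hdef, csSup_of_not_bddAbove hb, csSup_empty] at h1
    simp at h1

/-- Let `p` be an odd prime, `K = ℚ(ζ_p)` with maximal real subfield
`F = K⁺`, and suppose the `p`-part `A⁺` of the class group of `F` is cyclic and nontrivial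
of order `d = p^a`.  Let `H⁺` be the unramified (cyclic) extension of `K` of degree `d`
with `Gal(H⁺/K) ≅ A⁺` — the lift of the `p`-Hilbert class field of `K⁺` — which is a CM
field.  Then no primitive `p`-th root of unity is a norm of a unit:
`ζ_p ∉ N_{H⁺/K}(E(H⁺))`. -/
theorem statement6
    (p : ℕ+) [hp : Fact (p : ℕ).Prime] (hodd : (p : ℕ) ≠ 2)
    (F K H : Type*) [Field F] [NumberField F] [Field K] [NumberField K]
    [Field H] [NumberField H]
    [IsCyclotomicExtension {(p : ℕ)} ℚ K]
    -- `F = K⁺` is the maximal real subfield of `K`: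
    [Algebra F K] (hFreal : ∀ v : InfinitePlace F, v.IsReal)
    (hKimag : ∀ w : InfinitePlace K, ¬ w.IsReal)
    (hFK : Module.finrank F K = 2)
    -- `A⁺`, the `p`-part of `Cl(K⁺)`, is cyclic of order `d = p^a > 1`:
    (d a : ℕ) (hd : d = (p : ℕ) ^ a) (ha : 1 ≤ a)
    (hcyc : ∀ P : Sylow (p : ℕ) (ClassGroup (𝓞 F)), IsCyclic P ∧ Nat.card P = d)
    -- `H` is the lift `H⁺ = K ⬝ H(K⁺)` of the `p`-Hilbert class field of `F = K⁺`;
    -- it is a cyclic unramified extension of `K` of degree `d`, with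
    -- `Gal(H/K) ≅ A⁺`, and `H` is a CM field:
    [Algebra K H] [IsGalois K H] [FiniteDimensional K H]
    (hHcyc : IsCyclic (H ≃ₐ[K] H)) (hHdeg : Nat.card (H ≃ₐ[K] H) = d)
    (hgal : ∀ P : Sylow (p : ℕ) (ClassGroup (𝓞 F)), Nonempty ((H ≃ₐ[K] H) ≃* P))
    (hunramfin : UnramifiedAtFinitePrimes K H)
    (hunraminf : UnramifiedAtInfinitePlaces K H)
    (hHimag : ∀ w : InfinitePlace H, ¬ w.IsReal)
    (conj : H ≃ₐ[ℚ] H)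
    (hconj : ∀ (φ : H →+* ℂ) (x : H), φ (conj x) = starRingEnd ℂ (φ x))
    -- `ζ` is a primitive `p`-th root of unity in `K`:
    (ζ : 𝓞 K) (hζ : IsPrimitiveRoot ζ p) :
    ∀ u : (𝓞 H)ˣ, RingOfIntegers.norm K (u : 𝓞 H) ≠ ζ := by
  classical
  intro u hu
  have hp' : (p : ℕ).Prime := hp.out
  have hp2 : 2 ≤ (p : ℕ) := hp'.two_le
  have hppos : 0 < (p : ℕ) := p.pos
  haveI : NeZero ((p : ℕ)) := ⟨hppos.ne'⟩
  haveI : IsScalarTower ℚ K H := IsScalarTower.of_algebraMap_eq' (Subsingleton.elim _ _)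
  -- `2 ∤ d`
  have h2d : ¬ (2 ∣ d) := by
    intro h2
    rw [hd] at h2
    have h2p := (Nat.prime_two).dvd_of_dvd_pow h2
    exact hodd ((Nat.prime_dvd_prime_iff_eq Nat.prime_two hp').mp h2p).symm
  -- the primitive `p`-th root of unity at the various levels
  set zK : K := algebraMap (𝓞 K) K ζ with hzKdef
  have hzK : IsPrimitiveRoot zK (p : ℕ) := hζ.map_of_injective RingOfIntegers.coe_injective
  set z : H := algebraMap K H zK with hzdef
  have hz : IsPrimitiveRoot z (p : ℕ) := hzK.map_of_injective (algebraMap K H).injective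
  have hzpow : z ^ (p : ℕ) = 1 := hz.pow_eq_one
  -- complex conjugation sends `z` to `z⁻¹ = z ^ (p - 1)`
  haveI : Algebra.IsAlgebraic ℚ H := Algebra.IsAlgebraic.of_finite ℚ H
  let φ0 : H →+* ℂ := (IsAlgClosed.lift (R := ℚ) (S := H) (M := ℂ)).toRingHom
  have hcz : conj z = z ^ ((p : ℕ) - 1) := by
    apply φ0.injective
    have h1 : φ0 z ^ (p : ℕ) = 1 := by rw [← map_pow, hzpow, map_one]
    have habs : ‖φ0 z‖ = 1 := by
      exact Complex.norm_eq_one_of_pow_eq_one h1 hppos.ne'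
    have hinv : (starRingEnd ℂ) (φ0 z) = (φ0 z)⁻¹ := (Complex.inv_eq_conj habs).symm
    have hpow : φ0 z ^ ((p : ℕ) - 1) = (φ0 z)⁻¹ := by
      apply eq_inv_of_mul_eq_one_left
      rw [← pow_succ, Nat.sub_add_cancel (by omega), h1]
    rw [hconj φ0 z, map_pow, hinv, hpow]
  -- conjugation stabilizes the image of `K` in `H`
  have hstab : ∀ k : K, ∃ k' : K, conj (algebraMap K H k) = algebraMap K H k' := by
    intro k
    let ι : K →ₐ[ℚ] H := IsScalarTower.toAlgHom ℚ K H
    let ψ : K →ₐ[ℚ] H := conj.toAlgHom.comp ι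
    have hadj : k ∈ Subalgebra.comap ψ ι.range := by
      have h1 : k ∈ Algebra.adjoin ℚ
          {b : K | ∃ n : ℕ, n ∈ ({(p : ℕ)} : Set ℕ) ∧ n ≠ 0 ∧ b ^ n = 1} :=
        IsCyclotomicExtension.adjoin_roots k
      refine Algebra.adjoin_le ?_ h1
      rintro b ⟨m, hm, -, hb⟩
      simp only [Set.mem_singleton_iff] at hm
      rw [hm] at hb
      have hb' : (algebraMap K H b) ^ (p : ℕ) = 1 := by rw [← map_pow, hb, map_one]
      obtain ⟨i, hip, hi⟩ := hz.eq_pow_of_pow_eq_one hb'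
      show ψ b ∈ ι.range
      have key : ι (zK ^ (((p : ℕ) - 1) * i)) = ψ b := by
        show (algebraMap K H) (zK ^ (((p : ℕ) - 1) * i)) = conj (algebraMap K H b)
        rw [← hi, map_pow conj, hcz, ← pow_mul, map_pow, ← hzdef]
      exact ⟨zK ^ (((p : ℕ) - 1) * i), key⟩
    obtain ⟨k', hk'⟩ := hadj
    exact ⟨k', hk'.symm⟩
  have hstab' : ∀ g : H ≃ₐ[K] H, ∀ k : K,
      conj.symm (g (conj (algebraMap K H k))) = algebraMap K H k := by
    intro g k
    obtain ⟨k', hk'⟩ := hstab k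
    rw [hk', g.commutes, ← hk', AlgEquiv.symm_apply_apply]
  -- conjugation by `conj` permutes `Gal(H/K)`
  let Φ : (H ≃ₐ[K] H) → (H ≃ₐ[K] H) := fun g =>
    AlgEquiv.ofRingEquiv
      (f := conj.toRingEquiv.trans (g.toRingEquiv.trans conj.symm.toRingEquiv))
      (fun k => hstab' g k)
  have hΦapp : ∀ (g : H ≃ₐ[K] H) (y : H), Φ g y = conj.symm (g (conj y)) := fun _ _ => rfl
  have hΦbij : Function.Bijective Φ := by
    rw [Finite.injective_iff_bijective.symm]
    intro g₁ g₂ hg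
    ext y
    have h : conj.symm (g₁ (conj (conj.symm y))) = conj.symm (g₂ (conj (conj.symm y))) :=
      DFunLike.congr_fun hg (conj.symm y)
    rw [AlgEquiv.apply_symm_apply] at h
    exact conj.symm.injective h
  -- the norm commutes with conjugation
  have hnormconj : ∀ t : H,
      algebraMap K H (Algebra.norm K (conj t)) = conj (algebraMap K H (Algebra.norm K t)) := by
    intro t
    rw [Algebra.norm_eq_prod_automorphisms, Algebra.norm_eq_prod_automorphisms, map_prod]
    exact Fintype.prod_bijective Φ hΦbij (fun σ => σ (conj t)) (fun σ => conj (σ t))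
      (fun σ => by
        show σ (conj t) = conj (Φ σ t)
        rw [hΦapp, AlgEquiv.apply_symm_apply])
  -- conjugation on the ring of integers, and the unit `ε = u / conj u`
  let cc : (𝓞 H) ≃ₐ[ℤ] (𝓞 H) := galRestrict ℤ ℚ H (𝓞 H) conj
  have hcc : ∀ t : 𝓞 H, algebraMap (𝓞 H) H (cc t) = conj (algebraMap (𝓞 H) H t) :=
    fun t => algebraMap_galRestrict_apply ℤ conj t
  let uc : (𝓞 H)ˣ := Units.map cc.toAlgHom.toRingHom.toMonoidHom u
  let ε : (𝓞 H)ˣ := u * uc⁻¹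
  set x : H := algebraMap (𝓞 H) H (ε : 𝓞 H) with hxdef
  have hucH : algebraMap (𝓞 H) H (uc : 𝓞 H) = conj (algebraMap (𝓞 H) H (u : 𝓞 H)) := hcc u
  have hεuc : ((ε * uc : (𝓞 H)ˣ) : 𝓞 H) = ((u : (𝓞 H)ˣ) : 𝓞 H) := by
    have : ε * uc = u := by
      rw [show ε = u * uc⁻¹ from rfl, inv_mul_cancel_right]
    rw [this]
  have hxmul : x * algebraMap (𝓞 H) H (uc : 𝓞 H) = algebraMap (𝓞 H) H (u : 𝓞 H) := by
    rw [hxdef, ← map_mul]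
    exact congrArg _ hεuc
  -- Kronecker: `ε` is a root of unity
  have hxint : IsIntegral ℤ x := RingOfIntegers.isIntegral_coe _
  have hxnorm : ∀ φ : H →+* ℂ, ‖φ x‖ = 1 := by
    intro φ
    have h1 : φ x * φ (algebraMap (𝓞 H) H (uc : 𝓞 H)) = φ (algebraMap (𝓞 H) H (u : 𝓞 H)) := by
      rw [← map_mul, hxmul]
    have h2 : ‖φ (algebraMap (𝓞 H) H (uc : 𝓞 H))‖ = ‖φ (algebraMap (𝓞 H) H (u : 𝓞 H))‖ := by
      rw [hucH, hconj]
      exact norm_star _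
    have h3 : φ (algebraMap (𝓞 H) H (u : 𝓞 H)) ≠ 0 := by
      intro h0
      have hzero : algebraMap (𝓞 H) H (u : 𝓞 H) = 0 := by
        apply φ.injective
        rw [h0, map_zero]
      have : ((u : (𝓞 H)ˣ) : 𝓞 H) = 0 := RingOfIntegers.coe_injective (by rw [hzero, map_zero])
      exact u.ne_zero this
    have h4 : ‖φ (algebraMap (𝓞 H) H (u : 𝓞 H))‖ ≠ 0 := norm_ne_zero_iff.mpr h3
    have h5 := congrArg (‖·‖) h1
    simp only [norm_mul] at h5
    rw [h2] at h5
    exact mul_right_cancel₀ h4 (h5.trans (one_mul _).symm)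
  obtain ⟨N, hN, hxN⟩ := NumberField.Embeddings.pow_eq_one_of_norm_eq_one H ℂ hxint hxnorm
  have hxfin : IsOfFinOrder x := isOfFinOrder_iff_pow_eq_one.mpr ⟨N, hN, hxN⟩
  set n : ℕ := orderOf x with hndef
  have hn0 : 0 < n := hxfin.orderOf_pos
  -- the norm of `ε` is `ζ ^ 2`
  have hnormu : Algebra.norm K (algebraMap (𝓞 H) H (u : 𝓞 H)) = zK := by
    have h := congrArg (algebraMap (𝓞 K) K) hu
    rwa [← RingOfIntegers.coe_eq_algebraMap, ← RingOfIntegers.coe_eq_algebraMap,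
      RingOfIntegers.coe_norm] at h
  have hnormuc : Algebra.norm K (algebraMap (𝓞 H) H (uc : 𝓞 H)) = zK ^ ((p : ℕ) - 1) := by
    apply (algebraMap K H).injective
    rw [map_pow, hucH, hnormconj, hnormu]
    exact hcz
  have hzKne : zK ≠ 0 := hzK.ne_zero hppos.ne'
  have hnormx : Algebra.norm K x = zK ^ 2 := by
    have h1 : Algebra.norm K x * (zK ^ ((p : ℕ) - 1)) = zK := by
      rw [← hnormuc, ← map_mul, hxmul, hnormu]
    have h2 : (zK ^ 2) * (zK ^ ((p : ℕ) - 1)) = zK := by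
      rw [← pow_add, show 2 + ((p : ℕ) - 1) = (p : ℕ) + 1 by omega, pow_succ,
        hzK.pow_eq_one, one_mul]
    exact mul_right_cancel₀ (pow_ne_zero _ hzKne) (h1.trans h2.symm)
  -- degrees
  have hDdeg : Module.finrank K H = d := by
    rw [← hHdeg, IsGalois.card_aut_eq_finrank]
  have hQK : Module.finrank ℚ K = (p : ℕ) - 1 := by
    rw [IsCyclotomicExtension.finrank (n := p) K
      (Polynomial.cyclotomic.irreducible_rat p.pos), Nat.totient_prime hp']
  have hQH : Module.finrank ℚ H = ((p : ℕ) - 1) * d := by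
    rw [← hDdeg, ← hQK]
    exact (Module.finrank_mul_finrank ℚ K H).symm
  -- the degree bound from roots of unity in `H`
  have hdegRU : ∀ (y : H) (m : ℕ), 0 < m → IsPrimitiveRoot y m →
      m.totient ∣ ((p : ℕ) - 1) * d := by
    intro y m hm hy
    rw [← hQH]
    have hyint : IsIntegral ℚ y := IsIntegral.of_finite ℚ y
    have h1 : Module.finrank ℚ ℚ⟮y⟯ = m.totient := by
      rw [IntermediateField.adjoin.finrank hyint, ← Polynomial.cyclotomic_eq_minpoly_rat hy hm,
        Polynomial.natDegree_cyclotomic]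
    exact ⟨Module.finrank ℚ⟮y⟯ H, by rw [← h1]; exact (Module.finrank_mul_finrank ℚ ℚ⟮y⟯ H).symm⟩
  -- elements of prescribed order
  have hordpow : ∀ t : ℕ, 0 < t → t ∣ n → orderOf (x ^ (n / t)) = t := by
    intro t ht hdvd
    have hnt : n / t ≠ 0 := by
      have := Nat.div_pos (Nat.le_of_dvd hn0 hdvd) ht
      omega
    rw [orderOf_pow' x hnt, ← hndef, Nat.gcd_eq_right (Nat.div_dvd_of_dvd hdvd),
      Nat.div_div_self hdvd hn0.ne']
  -- no prime `q ∉ {2, p}` divides `n`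
  have hcaseA : ∀ q : ℕ, q.Prime → q ≠ 2 → q ≠ (p : ℕ) → ¬ (q ∣ n) := by
    intro q hq hq2 hqp hdvd
    have hy : orderOf (x ^ (n / q)) = q := hordpow q hq.pos hdvd
    have hco : Nat.Coprime (p : ℕ) q := (Nat.coprime_primes hp' hq).mpr fun h => hqp h.symm
    have hordz : orderOf z = (p : ℕ) := hz.eq_orderOf.symm
    have hord : orderOf (z * x ^ (n / q)) = (p : ℕ) * q := by
      rw [(Commute.all z (x ^ (n / q))).orderOf_mul_eq_mul_orderOf_of_coprime
        (by rw [hordz, hy]; exact hco), hordz, hy]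
    have hprim : IsPrimitiveRoot (z * x ^ (n / q)) ((p : ℕ) * q) := by
      have h := IsPrimitiveRoot.orderOf (z * x ^ (n / q))
      rwa [hord] at h
    have hdut := hdegRU _ _ (Nat.mul_pos hppos hq.pos) hprim
    rw [Nat.totient_mul hco, Nat.totient_prime hp', Nat.totient_prime hq] at hdut
    have hq1 : (q - 1) ∣ d :=
      (mul_dvd_mul_iff_left (show ((p : ℕ) - 1 : ℕ) ≠ 0 by omega)).mp hdut
    have h2q : 2 ∣ (q - 1) := by
      obtain ⟨c, hc⟩ := hq.odd_of_ne_two hq2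
      omega
    exact h2d (dvd_trans h2q hq1)
  -- `4 ∤ n`
  have hcaseB : ¬ ((4 : ℕ) ∣ n) := by
    intro hdvd
    have hy : orderOf (x ^ (n / 4)) = 4 := hordpow 4 (by norm_num) hdvd
    have hp2' : Nat.Coprime (p : ℕ) 2 :=
      (Nat.Prime.coprime_iff_not_dvd hp').mpr fun h =>
        hodd ((Nat.prime_dvd_prime_iff_eq hp' Nat.prime_two).mp h)
    have hco : Nat.Coprime (p : ℕ) 4 := by
      rw [show (4 : ℕ) = 2 ^ 2 by norm_num]
      exact hp2'.pow_right 2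
    have hordz : orderOf z = (p : ℕ) := hz.eq_orderOf.symm
    have hord : orderOf (z * x ^ (n / 4)) = (p : ℕ) * 4 := by
      rw [(Commute.all z (x ^ (n / 4))).orderOf_mul_eq_mul_orderOf_of_coprime
        (by rw [hordz, hy]; exact hco), hordz, hy]
    have hprim : IsPrimitiveRoot (z * x ^ (n / 4)) ((p : ℕ) * 4) := by
      have h := IsPrimitiveRoot.orderOf (z * x ^ (n / 4))
      rwa [hord] at h
    have hdut := hdegRU _ _ (Nat.mul_pos hppos (by norm_num)) hprim
    rw [Nat.totient_mul hco, Nat.totient_prime hp',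
      show Nat.totient 4 = 2 by decide] at hdut
    have h21 : (2 : ℕ) ∣ d :=
      (mul_dvd_mul_iff_left (show ((p : ℕ) - 1 : ℕ) ≠ 0 by omega)).mp hdut
    exact h2d h21
  -- `p ^ 2 ∤ n` -- this is where unramifiedness is used
  have hcaseC : ¬ ((p : ℕ) ^ 2 ∣ n) := by
    intro hdvd
    have hpp1 : 1 < (p : ℕ) ^ 2 := by nlinarith
    -- `ρ`, of order `p ^ 2`, inside the ring of integers
    set ρU : (𝓞 H)ˣ := ε ^ (n / (p : ℕ) ^ 2) with hρUdef
    set ρ : 𝓞 H := (ρU : 𝓞 H) with hρdef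
    have hρH : algebraMap (𝓞 H) H ρ = x ^ (n / (p : ℕ) ^ 2) := by
      rw [hρdef, hρUdef, Units.val_pow_eq_pow_val, map_pow, hxdef]
    have hordρH : orderOf (algebraMap (𝓞 H) H ρ) = (p : ℕ) ^ 2 := by
      rw [hρH]
      exact hordpow _ (by positivity) hdvd
    have hordρ : orderOf ρ = (p : ℕ) ^ 2 := by
      rw [← orderOf_injective (algebraMap (𝓞 H) H).toMonoidHom RingOfIntegers.coe_injective ρ]
      exact hordρH
    have hρpp : ρ ^ ((p : ℕ) ^ 2) = 1 := by
      rw [← hordρ]; exact pow_orderOf_eq_one ρ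
    have hρunit : IsUnit ρ := ρU.isUnit
    -- `w = ρ ^ p`, a primitive `p`-th root in the ring of integers
    set w : 𝓞 H := ρ ^ (p : ℕ) with hwdef
    have hordw : orderOf w = (p : ℕ) := by
      rw [hwdef, orderOf_pow' ρ hppos.ne', hordρ,
        Nat.gcd_eq_right (dvd_pow_self (p : ℕ) two_ne_zero), pow_two,
        Nat.mul_div_cancel_left _ hppos]
    have hwprim : IsPrimitiveRoot w (p : ℕ) := by
      have h := IsPrimitiveRoot.orderOf w
      rwa [hordw] at h
    have hwpow : w ^ (p : ℕ) = 1 := hwprim.pow_eq_one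
    -- `w` is the image of a primitive `p`-th root `ζ' = ζ ^ i` of `𝓞 K`
    obtain ⟨i, hip, hzi⟩ := hz.eq_pow_of_pow_eq_one
      (ξ := algebraMap (𝓞 H) H w) (by rw [← map_pow, hwpow, map_one])
    have hordwH : orderOf (algebraMap (𝓞 H) H w) = (p : ℕ) :=
      (orderOf_injective (algebraMap (𝓞 H) H).toMonoidHom
        RingOfIntegers.coe_injective w).trans hordw
    have hico : Nat.Coprime i (p : ℕ) := by
      have hi0 : i ≠ 0 := by
        intro h0
        rw [h0, pow_zero] at hzi
        rw [← hzi, orderOf_one] at hordwH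
        omega
      have h1 : orderOf (z ^ i) = (p : ℕ) := by rw [hzi]; exact hordwH
      rw [orderOf_pow' z hi0, ← hz.eq_orderOf] at h1
      have h2 := Nat.div_eq_self.mp h1
      rcases h2 with h2 | h2
      · omega
      · exact Nat.coprime_comm.mp h2
    set ζ' : 𝓞 K := ζ ^ i with hζ'def
    have hζ'K : IsPrimitiveRoot (algebraMap (𝓞 K) K ζ') (p : ℕ) := by
      rw [hζ'def, map_pow]
      exact hzK.pow_of_coprime i hico
    have hζ'prime : Prime (ζ' - 1) := by
      have h := hζ'K.zeta_sub_one_prime'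
      have heq : hζ'K.toInteger = ζ' := by
        apply RingOfIntegers.ext
        rfl
      rwa [heq] at h
    have hkeyw : algebraMap (𝓞 K) (𝓞 H) ζ' = w := by
      apply RingOfIntegers.coe_injective
      rw [← RingOfIntegers.coe_eq_algebraMap, ← RingOfIntegers.coe_eq_algebraMap,
        RingOfIntegers.coe_eq_algebraMap, RingOfIntegers.coe_eq_algebraMap,
        ← IsScalarTower.algebraMap_apply (𝓞 K) (𝓞 H) H,
        IsScalarTower.algebraMap_apply (𝓞 K) K H, hζ'def, map_pow, map_pow]
      exact hzi
    -- the product identity `w - 1 = ∏_{θ^p = 1} (ρ - θ)`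
    have hprodId : w - 1 = ∏ θ ∈ Polynomial.nthRootsFinset (p : ℕ) (1 : 𝓞 H), (ρ - θ) := by
      have h := hwprim.pow_sub_pow_eq_prod_sub_mul (x := ρ) (y := 1) hppos
      simp only [one_pow, mul_one] at h
      rw [hwdef]
      exact h
    -- each factor is associated to `ρ - 1`
    have hfact : ∀ θ ∈ Polynomial.nthRootsFinset (p : ℕ) (1 : 𝓞 H), Associated (ρ - 1) (ρ - θ) := by
      intro θ hθ
      have hθp : θ ^ (p : ℕ) = 1 := (Polynomial.mem_nthRootsFinset hppos 1).mp hθ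
      obtain ⟨j, hjp, hj⟩ := hwprim.eq_pow_of_pow_eq_one hθp
      have hjle : (p : ℕ) * j ≤ (p : ℕ) ^ 2 := by
        have h1 : (p : ℕ) * j ≤ (p : ℕ) * (p : ℕ) := Nat.mul_le_mul_left _ (le_of_lt hjp)
        rwa [← pow_two] at h1
      set t : ℕ := (p : ℕ) ^ 2 + 1 - (p : ℕ) * j with htdef
      have ht1 : (p : ℕ) * j + t = (p : ℕ) ^ 2 + 1 := by omega
      have hteq : t = 1 + ((p : ℕ) - j) * (p : ℕ) := by
        have h1 : ((p : ℕ) - j) * (p : ℕ) = (p : ℕ) * (p : ℕ) - j * (p : ℕ) :=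
          Nat.sub_mul _ _ _
        have h2 : j * (p : ℕ) ≤ (p : ℕ) * (p : ℕ) := by
          rw [Nat.mul_comm j]
          rwa [← pow_two]
        have h3 : (p : ℕ) * j = j * (p : ℕ) := Nat.mul_comm _ _
        rw [htdef, h1, pow_two]
        omega
      have htco : Nat.Coprime t (p : ℕ) := by
        rw [Nat.coprime_comm]
        unfold Nat.Coprime
        rw [Nat.gcd_rec, hteq, Nat.add_mul_mod_self_right, Nat.mod_eq_of_lt (by omega),
          Nat.gcd_one_left]
      have htco2 : Nat.Coprime t ((p : ℕ) ^ 2) := htco.pow_right 2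
      have hθρ : θ = ρ ^ ((p : ℕ) * j) := by rw [← hj, hwdef, ← pow_mul]
      have hρsq : ρ ^ ((p : ℕ) ^ 2 + 1) = ρ := by rw [pow_succ, hρpp, one_mul]
      have hid : ρ - θ = ρ ^ ((p : ℕ) * j) * (ρ ^ t - 1) := by
        rw [mul_sub, mul_one, ← pow_add, ht1, hρsq, hθρ]
      have hdvd1 : (ρ - 1) ∣ (ρ ^ t - 1) := by
        have h := sub_dvd_pow_sub_pow ρ 1 t
        rwa [one_pow] at h
      have hdvd2 : (ρ ^ t - 1) ∣ (ρ - 1) := by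
        obtain ⟨m, -, hm⟩ := Nat.exists_mul_mod_eq_one_of_coprime htco2 hpp1
        have h1 : ρ ^ (t * m) = ρ := by
          have h2 : ρ ^ (t * m % ((p : ℕ) ^ 2)) = ρ ^ (t * m) := by
            rw [← hordρ]
            exact pow_mod_orderOf ρ (t * m)
          rw [← h2, hm, pow_one]
        have h := sub_dvd_pow_sub_pow (ρ ^ t) 1 m
        rwa [one_pow, ← pow_mul, h1] at h
      have hassoc : Associated (ρ - 1) (ρ ^ t - 1) := associated_of_dvd_dvd hdvd1 hdvd2
      have hρju : IsUnit (ρ ^ ((p : ℕ) * j)) := hρunit.pow _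
      refine hassoc.trans ?_
      rw [hid]
      exact ⟨hρju.unit, by rw [IsUnit.unit_spec, mul_comm]⟩
    -- `ρ - 1` is not a unit
    have hDpos : 0 < Module.finrank K H := Module.finrank_pos
    have hnonunit : ¬ IsUnit (ρ - 1) := by
      intro hun
      have hassocProd : Associated ((ρ - 1) ^ (p : ℕ)) (w - 1) := by
        rw [hprodId]
        have h := Associated.prod (Polynomial.nthRootsFinset (p : ℕ) (1 : 𝓞 H))
          (fun _ => ρ - 1) (fun θ => ρ - θ) hfact
        rwa [Finset.prod_const, hwprim.card_nthRootsFinset] at h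
      have hwu : IsUnit (w - 1) := hassocProd.isUnit (hun.pow _)
      rw [← hkeyw] at hwu
      have h1 : IsUnit (algebraMap (𝓞 K) (𝓞 H) (ζ' - 1)) := by rwa [map_sub, map_one]
      have h2 := h1.map (RingOfIntegers.norm K)
      rw [RingOfIntegers.norm_algebraMap] at h2
      exact hζ'prime.not_unit ((isUnit_pow_iff hDpos.ne').mp h2)
    -- a maximal ideal containing `ρ - 1`
    obtain ⟨P, hPmax, hPle⟩ := Ideal.exists_le_maximal (Ideal.span {ρ - 1})
      (fun h => hnonunit (Ideal.span_singleton_eq_top.mp h))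
    have hρP : ρ - 1 ∈ P := hPle (Ideal.subset_span rfl)
    have hfacP : ∀ θ ∈ Polynomial.nthRootsFinset (p : ℕ) (1 : 𝓞 H), ρ - θ ∈ P := by
      intro θ hθ
      obtain ⟨v, hv⟩ := hfact θ hθ
      rw [← hv]
      exact Ideal.mul_mem_right _ P hρP
    have hwP2 : w - 1 ∈ P ^ 2 := by
      rw [hprodId]
      have h1mem : (1 : 𝓞 H) ∈ Polynomial.nthRootsFinset (p : ℕ) (1 : 𝓞 H) :=
        Polynomial.one_mem_nthRootsFinset hppos
      have hwmem : w ∈ Polynomial.nthRootsFinset (p : ℕ) (1 : 𝓞 H) :=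
        hwprim.mem_nthRootsFinset hppos
      have hw1 : w ≠ 1 := by
        intro h
        rw [h, orderOf_one] at hordw
        omega
      have hwmem' : w ∈ (Polynomial.nthRootsFinset (p : ℕ) (1 : 𝓞 H)).erase 1 :=
        Finset.mem_erase.mpr ⟨hw1, hwmem⟩
      rw [← Finset.mul_prod_erase _ _ h1mem, ← Finset.mul_prod_erase _ _ hwmem', pow_two]
      exact Ideal.mul_mem_mul (hfacP 1 h1mem)
        (Ideal.mul_mem_right _ P (hfacP w hwmem))
    -- the prime below
    set q : Ideal (𝓞 K) := Ideal.span {ζ' - 1} with hqdef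
    have hqprime : q.IsPrime := (Ideal.span_singleton_prime hζ'prime.ne_zero).mpr hζ'prime
    have hqbot : q ≠ ⊥ := by
      rw [hqdef, Ne, Ideal.span_singleton_eq_bot]
      exact hζ'prime.ne_zero
    have hqmax : q.IsMaximal := Ideal.IsPrime.isMaximal hqprime hqbot
    have hwinP : algebraMap (𝓞 K) (𝓞 H) (ζ' - 1) ∈ P := by
      rw [map_sub, map_one, hkeyw]
      exact (Ideal.pow_le_self two_ne_zero) hwP2
    have hcomap : P.comap (algebraMap (𝓞 K) (𝓞 H)) = q := by
      refine (hqmax.eq_of_le (Ideal.comap_ne_top _ hPmax.ne_top) ?_).symm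
      rw [hqdef, Ideal.span_le, Set.singleton_subset_iff]
      exact hwinP
    have hmaple : Ideal.map (algebraMap (𝓞 K) (𝓞 H)) q ≤ P ^ 2 := by
      rw [hqdef, Ideal.map_span, Set.image_singleton, Ideal.span_le, Set.singleton_subset_iff]
      show algebraMap (𝓞 K) (𝓞 H) (ζ' - 1) ∈ (P ^ 2 : Ideal (𝓞 H))
      rw [map_sub, map_one, hkeyw]
      exact hwP2
    have hram := hunramfin P hPmax
    rw [hcomap] at hram
    exact ramIdx_ne_one' q P hmaple hram
  -- hence `n ∣ 2p`
  have hn2p : n ∣ 2 * (p : ℕ) := by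
    rw [← Nat.factorization_le_iff_dvd hn0.ne' (by positivity)]
    rw [Finsupp.le_def]
    intro q
    by_cases hq : q.Prime
    · have h2p : (2 * (p : ℕ)).factorization q
          = (2 : ℕ).factorization q + ((p : ℕ)).factorization q := by
        rw [Nat.factorization_mul (by norm_num) hppos.ne']
        rfl
      by_cases hq2 : q = 2
      · subst hq2
        have hle1 : n.factorization 2 ≤ 1 := by
          by_contra hgt
          push_neg at hgt
          apply hcaseB
          have h4 := (Nat.Prime.pow_dvd_iff_le_factorization Nat.prime_two hn0.ne').mpr hgt
          norm_num at h4
          exact h4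
        have h22 : (2 : ℕ).factorization 2 = 1 := by
          rw [Nat.Prime.factorization Nat.prime_two]
          simp
        rw [h2p, h22]
        omega
      · by_cases hqp : q = (p : ℕ)
        · subst hqp
          have hle1 : n.factorization (p : ℕ) ≤ 1 := by
            by_contra hgt
            push_neg at hgt
            exact hcaseC ((Nat.Prime.pow_dvd_iff_le_factorization hp' hn0.ne').mpr hgt)
          have hpp : ((p : ℕ)).factorization (p : ℕ) = 1 := by
            rw [Nat.Prime.factorization hp']
            simp
          rw [h2p, hpp]
          omega
        · have h0 : n.factorization q = 0 :=
            Nat.factorization_eq_zero_of_not_dvd (fun hdvd => hcaseA q hq hq2 hqp hdvd)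
          rw [h0]
          exact Nat.zero_le _
    · simp [Nat.factorization_eq_zero_of_not_prime _ hq]
  -- conclude: `(x^2)^p = 1`, so `x^2 = z^k` and `ζ^4 = 1`, a contradiction
  have hx2p : x ^ (2 * (p : ℕ)) = 1 := by
    apply orderOf_dvd_iff_pow_eq_one.mp
    rw [← hndef]
    exact hn2p
  have hx2 : (x ^ 2) ^ (p : ℕ) = 1 := by rw [← pow_mul]; exact hx2p
  obtain ⟨k, hkp, hk⟩ := hz.eq_pow_of_pow_eq_one hx2
  have hnormzk : Algebra.norm K (z ^ k) = zK ^ (k * d) := by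
    rw [hzdef, ← map_pow, Algebra.norm_algebraMap, ← pow_mul, hDdeg]
  have h4 : zK ^ 4 = zK ^ (k * d) := by
    have h1 : Algebra.norm K (x ^ 2) = zK ^ 4 := by
      rw [map_pow, hnormx, ← pow_mul]
    rw [← h1, ← hk, hnormzk]
  have hzd : zK ^ (k * d) = 1 := by
    have hpa : (p : ℕ) ^ a = (p : ℕ) * (p : ℕ) ^ (a - 1) := by
      rw [← pow_succ']
      congr 1
      omega
    rw [hd, hpa, show k * ((p : ℕ) * (p : ℕ) ^ (a - 1)) = (p : ℕ) * (k * (p : ℕ) ^ (a - 1))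
      from by ring, pow_mul, hzK.pow_eq_one, one_pow]
  have hp4 : (p : ℕ) ∣ 4 := hzK.dvd_of_pow_eq_one 4 (h4.trans hzd)
  have hp2' : (p : ℕ) ∣ 2 := by
    have h42 : (4 : ℕ) = 2 ^ 2 := by norm_num
    exact hp'.dvd_of_dvd_pow (h42 ▸ hp4)
  exact hodd ((Nat.prime_dvd_prime_iff_eq hp' Nat.prime_two).mp hp2')
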